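/- With parameters 𝔞 = α+iβ, 𝔟 = γ+iδ, 𝔠 = α-iβ, 𝔡 = γ-iδ where α, β, γ, δ > 0, the coefficient u_n = -A_{n-1}C_n of the modified Bannai–Ito recurrence is a strictly positive real number for every integer n ≥ 1; explicitly for n even, u_n = n(n+4α+4γ+2)|n+2(α+γ+i(β+δ))+1|²/(4(n+2α+2γ+1)²), and for n odd, u_n = (n+4α+1)(n+4γ+1)|n+2(α+γ+i(β-δ))+1|²/(4(n+2α+2γ+1)²). -/

import Mathlib

open Complex

/-- Bannai–Ito recurrence coefficient `Aₙ`. -/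
noncomputable def Acoef (a b c d : ℂ) (n : ℕ) : ℂ :=
  if Even n then
    ((n : ℂ) + 2*a + 2*c + 2) * ((n : ℂ) + 2*a + 2*d + 2) / (2 * ((n : ℂ) + a + b + c + d + 2))
  else
    ((n : ℂ) + 2*a + 2*b + 2) * ((n : ℂ) + 2*a + 2*b + 2*c + 2*d + 3)
      / (2 * ((n : ℂ) + a + b + c + d + 2))

/-- Bannai–Ito recurrence coefficient `Cₙ`. -/
noncomputable def Ccoef (a b c d : ℂ) (n : ℕ) : ℂ :=
  if Even n then
    -((n : ℂ) * ((n : ℂ) + 2*c + 2*d + 1)) / (2 * ((n : ℂ) + a + b + c + d + 1))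
  else
    -(((n : ℂ) + 2*b + 2*c + 1) * ((n : ℂ) + 2*b + 2*d + 1))
      / (2 * ((n : ℂ) + a + b + c + d + 1))

/-- Off-diagonal recurrence coefficient `uₙ = -Aₙ₋₁Cₙ` of the modified
Bannai–Ito polynomials. -/
noncomputable def ucoef (a b c d : ℂ) (n : ℕ) : ℂ :=
  -(Acoef a b c d (n - 1)) * Ccoef a b c d n

lemma keyE (t u x y : ℂ) :
    -((x + y*I) * u / (2*x)) * (-(t * (x - y*I)) / (2*x))
      = t * u * (x^2 + y^2) / (4*x^2) := by
  have h : (x + y*I) * (x - y*I) = x^2 + y^2 := by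
    linear_combination (-(y^2)) * Complex.I_sq
  calc -((x + y*I) * u / (2*x)) * (-(t * (x - y*I)) / (2*x))
      = t * u * ((x + y*I) * (x - y*I)) / ((2*x) * (2*x)) := by ring
    _ = t * u * (x^2 + y^2) / (4*x^2) := by rw [h, show (2*x)*(2*x) = 4*x^2 by ring]

lemma keyO (p q x y : ℂ) :
    -(p * (x + y*I) / (2*x)) * (-((x - y*I) * q) / (2*x))
      = p * q * (x^2 + y^2) / (4*x^2) := by
  have h : (x + y*I) * (x - y*I) = x^2 + y^2 := by
    linear_combination (-(y^2)) * Complex.I_sq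
  calc -(p * (x + y*I) / (2*x)) * (-((x - y*I) * q) / (2*x))
      = p * q * ((x + y*I) * (x - y*I)) / ((2*x) * (2*x)) := by ring
    _ = p * q * (x^2 + y^2) / (4*x^2) := by rw [h, show (2*x)*(2*x) = 4*x^2 by ring]

/-- With `𝔞 = α+iβ, 𝔟 = γ+iδ, 𝔠 = α-iβ, 𝔡 = γ-iδ` where `α, β, γ, δ > 0`, the
coefficient `uₙ` is a strictly positive real for every `n ≥ 1`, given explicitly
by `uₙ = n(n+4α+4γ+2)|n+2(α+γ+i(β+δ))+1|²/(4(n+2α+2γ+1)²)` for `n` even and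
`uₙ = (n+4α+1)(n+4γ+1)|n+2(α+γ+i(β-δ))+1|²/(4(n+2α+2γ+1)²)` for `n` odd. -/
theorem ucoef_pos (α β γ δ : ℝ) (hα : 0 < α) (hβ : 0 < β) (hγ : 0 < γ) (hδ : 0 < δ)
    (n : ℕ) (hn : 1 ≤ n) :
    (ucoef ((α : ℂ) + β * I) ((γ : ℂ) + δ * I) ((α : ℂ) - β * I) ((γ : ℂ) - δ * I) n).im = 0 ∧
    0 < (ucoef ((α : ℂ) + β * I) ((γ : ℂ) + δ * I) ((α : ℂ) - β * I) ((γ : ℂ) - δ * I) n).re ∧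
    (Even n →
      ucoef ((α : ℂ) + β * I) ((γ : ℂ) + δ * I) ((α : ℂ) - β * I) ((γ : ℂ) - δ * I) n
        = (((n : ℝ) * ((n : ℝ) + 4*α + 4*γ + 2)
            * ‖(n : ℂ) + 2*((α : ℂ) + γ + I*((β : ℂ) + δ)) + 1‖ ^ 2
            / (4 * ((n : ℝ) + 2*α + 2*γ + 1) ^ 2) : ℝ) : ℂ)) ∧
    (¬ Even n →
      ucoef ((α : ℂ) + β * I) ((γ : ℂ) + δ * I) ((α : ℂ) - β * I) ((γ : ℂ) - δ * I) n
        = ((((n : ℝ) + 4*α + 1) * ((n : ℝ) + 4*γ + 1)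
            * ‖(n : ℂ) + 2*((α : ℂ) + γ + I*((β : ℂ) - δ)) + 1‖ ^ 2
            / (4 * ((n : ℝ) + 2*α + 2*γ + 1) ^ 2) : ℝ) : ℂ)) := by
  have hn' : (0:ℝ) < (n:ℝ) := by exact_mod_cast hn
  have hx0 : (0:ℝ) < (n:ℝ) + 2*α + 2*γ + 1 := by positivity
  rcases Nat.even_or_odd n with he | ho
  · -- even case
    have hodd : Odd (n - 1) := Nat.Even.sub_odd hn he odd_one
    have habs : ‖(n : ℂ) + 2*((α : ℂ) + γ + I*((β : ℂ) + δ)) + 1‖ ^ 2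
        = ((n:ℝ) + 2*α + 2*γ + 1)^2 + (2*(β+δ))^2 := by
      rw [show (n : ℂ) + 2*((α : ℂ) + γ + I*((β : ℂ) + δ)) + 1
          = (((n:ℝ) + 2*α + 2*γ + 1 : ℝ) : ℂ) + ((2*(β+δ) : ℝ) : ℂ) * I by push_cast; ring,
        Complex.sq_norm, Complex.normSq_add_mul_I]
    have key : ucoef ((α : ℂ) + β * I) ((γ : ℂ) + δ * I) ((α : ℂ) - β * I) ((γ : ℂ) - δ * I) n
        = (((n : ℝ) * ((n : ℝ) + 4*α + 4*γ + 2)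
            * ‖(n : ℂ) + 2*((α : ℂ) + γ + I*((β : ℂ) + δ)) + 1‖ ^ 2
            / (4 * ((n : ℝ) + 2*α + 2*γ + 1) ^ 2) : ℝ) : ℂ) := by
      rw [habs]
      simp only [ucoef, Acoef, Ccoef, if_neg (Nat.not_even_iff_odd.mpr hodd), if_pos he,
        Nat.cast_sub hn, Nat.cast_one]
      rw [show ((n:ℂ) - 1 + 2*((α : ℂ) + β * I) + 2*((γ : ℂ) + δ * I) + 2)
          = (((n:ℝ) + 2*α + 2*γ + 1 : ℝ) : ℂ) + ((2*(β+δ) : ℝ) : ℂ) * I by push_cast; ring,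
        show ((n:ℂ) - 1 + 2*((α : ℂ) + β * I) + 2*((γ : ℂ) + δ * I) + 2*((α : ℂ) - β * I)
            + 2*((γ : ℂ) - δ * I) + 3) = (((n:ℝ) + 4*α + 4*γ + 2 : ℝ) : ℂ) by push_cast; ring,
        show ((n:ℂ) - 1 + ((α : ℂ) + β * I) + ((γ : ℂ) + δ * I) + ((α : ℂ) - β * I)
            + ((γ : ℂ) - δ * I) + 2) = (((n:ℝ) + 2*α + 2*γ + 1 : ℝ) : ℂ) by push_cast; ring,
        show ((n:ℂ) + 2*((α : ℂ) - β * I) + 2*((γ : ℂ) - δ * I) + 1)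
          = (((n:ℝ) + 2*α + 2*γ + 1 : ℝ) : ℂ) - ((2*(β+δ) : ℝ) : ℂ) * I by push_cast; ring,
        show ((n:ℂ) + ((α : ℂ) + β * I) + ((γ : ℂ) + δ * I) + ((α : ℂ) - β * I)
            + ((γ : ℂ) - δ * I) + 1) = (((n:ℝ) + 2*α + 2*γ + 1 : ℝ) : ℂ) by push_cast; ring,
        keyE]
      push_cast
      ring
    refine ⟨by rw [key]; exact Complex.ofReal_im _, ?_, fun _ => key, fun h => absurd he h⟩
    rw [key, Complex.ofReal_re, habs]
    have h1 : (0:ℝ) < (n:ℝ) + 4*α + 4*γ + 2 := by positivity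
    have h2 : (0:ℝ) < ((n:ℝ) + 2*α + 2*γ + 1)^2 + (2*(β+δ))^2 := by positivity
    exact div_pos (mul_pos (mul_pos hn' h1) h2) (by positivity)
  · -- odd case
    have heven : Even (n - 1) := Nat.Odd.sub_odd ho odd_one
    have habs : ‖(n : ℂ) + 2*((α : ℂ) + γ + I*((β : ℂ) - δ)) + 1‖ ^ 2
        = ((n:ℝ) + 2*α + 2*γ + 1)^2 + (2*(β-δ))^2 := by
      rw [show (n : ℂ) + 2*((α : ℂ) + γ + I*((β : ℂ) - δ)) + 1
          = (((n:ℝ) + 2*α + 2*γ + 1 : ℝ) : ℂ) + ((2*(β-δ) : ℝ) : ℂ) * I by push_cast; ring,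
        Complex.sq_norm, Complex.normSq_add_mul_I]
    have key : ucoef ((α : ℂ) + β * I) ((γ : ℂ) + δ * I) ((α : ℂ) - β * I) ((γ : ℂ) - δ * I) n
        = ((((n : ℝ) + 4*α + 1) * ((n : ℝ) + 4*γ + 1)
            * ‖(n : ℂ) + 2*((α : ℂ) + γ + I*((β : ℂ) - δ)) + 1‖ ^ 2
            / (4 * ((n : ℝ) + 2*α + 2*γ + 1) ^ 2) : ℝ) : ℂ) := by
      rw [habs]
      simp only [ucoef, Acoef, Ccoef, if_pos heven, if_neg (Nat.not_even_iff_odd.mpr ho),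
        Nat.cast_sub hn, Nat.cast_one]
      rw [show ((n:ℂ) - 1 + 2*((α : ℂ) + β * I) + 2*((α : ℂ) - β * I) + 2)
          = (((n:ℝ) + 4*α + 1 : ℝ) : ℂ) by push_cast; ring,
        show ((n:ℂ) - 1 + 2*((α : ℂ) + β * I) + 2*((γ : ℂ) - δ * I) + 2)
          = (((n:ℝ) + 2*α + 2*γ + 1 : ℝ) : ℂ) + ((2*(β-δ) : ℝ) : ℂ) * I by push_cast; ring,
        show ((n:ℂ) - 1 + ((α : ℂ) + β * I) + ((γ : ℂ) + δ * I) + ((α : ℂ) - β * I)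
            + ((γ : ℂ) - δ * I) + 2) = (((n:ℝ) + 2*α + 2*γ + 1 : ℝ) : ℂ) by push_cast; ring,
        show ((n:ℂ) + 2*((γ : ℂ) + δ * I) + 2*((α : ℂ) - β * I) + 1)
          = (((n:ℝ) + 2*α + 2*γ + 1 : ℝ) : ℂ) - ((2*(β-δ) : ℝ) : ℂ) * I by push_cast; ring,
        show ((n:ℂ) + 2*((γ : ℂ) + δ * I) + 2*((γ : ℂ) - δ * I) + 1)
          = (((n:ℝ) + 4*γ + 1 : ℝ) : ℂ) by push_cast; ring,
        show ((n:ℂ) + ((α : ℂ) + β * I) + ((γ : ℂ) + δ * I) + ((α : ℂ) - β * I)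
            + ((γ : ℂ) - δ * I) + 1) = (((n:ℝ) + 2*α + 2*γ + 1 : ℝ) : ℂ) by push_cast; ring,
        keyO]
      push_cast
      ring
    refine ⟨by rw [key]; exact Complex.ofReal_im _, ?_, fun h => absurd h (Nat.not_even_iff_odd.mpr ho), fun _ => key⟩
    rw [key, Complex.ofReal_re, habs]
    have h1 : (0:ℝ) < (n:ℝ) + 4*α + 1 := by positivity
    have h2 : (0:ℝ) < (n:ℝ) + 4*γ + 1 := by positivity
    have h3 : (0:ℝ) < ((n:ℝ) + 2*α + 2*γ + 1)^2 + (2*(β-δ))^2 := by positivity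
    exact div_pos (mul_pos (mul_pos h1 h2) h3) (by positivity)
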